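/- Let A be an abelian category. Suppose given morphisms f₁ : X ⟶ Y, f₂ : Y ⟶ Z, x : X ⟶ X', y : Y ⟶ Y', z : Z ⟶ Z', f₁' : X' ⟶ Y', f₂' : Y' ⟶ Z' with f₁ ≫ y = x ≫ f₁' and f₂ ≫ z = y ≫ f₂'. If the quadrangle (f₁, x, y, f₁') is a weak square and the quadrangle (f₂, y, z, f₂') is a weak square, then the composite quadrangle (f₁ ≫ f₂, x, z, f₁' ≫ f₂') is a weak square. -/
import Mathlib


open CategoryTheory CategoryTheory.Limits

/-- A commutative quadrangle `(f, g, h, k)` (with `f ≫ h = g ≫ k`) in an abelian category is a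
*weak square* if its diagonal sequence `A ⟶ B ⊞ C ⟶ D`, with first morphism `biprod.lift f g`
and second morphism `biprod.desc h (-k)`, is exact at `B ⊞ C`. -/
def IsWeakSquare {A : Type*} [Category A] [Abelian A] {W X Y Z : A}
    (f : W ⟶ X) (g : W ⟶ Y) (h : X ⟶ Z) (k : Y ⟶ Z) : Prop :=
  ∃ w : biprod.lift f g ≫ biprod.desc h (-k) = 0,
    (ShortComplex.mk (biprod.lift f g) (biprod.desc h (-k)) w).Exact

/-- "Element-wise" reformulation of weak squares, via refinements. -/
lemma IsWeakSquare.chase {A : Type*} [Category A] [Abelian A] {W X Y Z : A}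
    {f : W ⟶ X} {g : W ⟶ Y} {h : X ⟶ Z} {k : Y ⟶ Z} (hw : IsWeakSquare f g h k)
    {T : A} (b : T ⟶ X) (c : T ⟶ Y) (hbc : b ≫ h = c ≫ k) :
    ∃ (T' : A) (π : T' ⟶ T) (_ : Epi π) (a : T' ⟶ W),
      π ≫ b = a ≫ f ∧ π ≫ c = a ≫ g := by
  obtain ⟨w, hex⟩ := hw
  obtain ⟨T', π, hπ, a, ha⟩ := hex.exact_up_to_refinements (biprod.lift b c)
    (by simp [biprod.lift_desc, hbc])
  refine ⟨T', π, hπ, a, ?_, ?_⟩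
  · simpa using congrArg (· ≫ biprod.fst) ha
  · simpa using congrArg (· ≫ biprod.snd) ha

lemma isWeakSquare_of_chase {A : Type*} [Category A] [Abelian A] {W X Y Z : A}
    {f : W ⟶ X} {g : W ⟶ Y} {h : X ⟶ Z} {k : Y ⟶ Z} (w : f ≫ h = g ≫ k)
    (hc : ∀ ⦃T : A⦄ (b : T ⟶ X) (c : T ⟶ Y), b ≫ h = c ≫ k →
      ∃ (T' : A) (π : T' ⟶ T) (_ : Epi π) (a : T' ⟶ W),
        π ≫ b = a ≫ f ∧ π ≫ c = a ≫ g) :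
    IsWeakSquare f g h k := by
  refine ⟨by simp [biprod.lift_desc, w], ?_⟩
  rw [ShortComplex.exact_iff_exact_up_to_refinements]
  intro T t ht
  obtain ⟨T', π, hπ, a, h1, h2⟩ := hc (t ≫ biprod.fst) (t ≫ biprod.snd)
    (by
      rw [← sub_eq_zero, Category.assoc, Category.assoc, ← Preadditive.comp_sub]
      convert ht using 2
      apply biprod.hom_ext' <;> simp)
  refine ⟨T', π, hπ, a, ?_⟩
  apply biprod.hom_ext <;> simp [h1, h2]

/-- If the two quadrangles `(f₁, x, y, f₁')` and `(f₂, y, z, f₂')` are weak squares, then so is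
the composite quadrangle `(f₁ ≫ f₂, x, z, f₁' ≫ f₂')`. -/
theorem isWeakSquare_comp {A : Type*} [Category A] [Abelian A]
    {X Y Z X' Y' Z' : A}
    (f₁ : X ⟶ Y) (f₂ : Y ⟶ Z) (x : X ⟶ X') (y : Y ⟶ Y') (z : Z ⟶ Z')
    (f₁' : X' ⟶ Y') (f₂' : Y' ⟶ Z')
    (comm₁ : f₁ ≫ y = x ≫ f₁') (comm₂ : f₂ ≫ z = y ≫ f₂')
    (h₁ : IsWeakSquare f₁ x y f₁') (h₂ : IsWeakSquare f₂ y z f₂') :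
    IsWeakSquare (f₁ ≫ f₂) x z (f₁' ≫ f₂') := by
  refine isWeakSquare_of_chase (by rw [Category.assoc, comm₂, reassoc_of% comm₁]) ?_
  intro T c d hcd
  obtain ⟨T₁, π₁, hπ₁, b, hb1, hb2⟩ := h₂.chase c (d ≫ f₁')
    (by rw [hcd, Category.assoc])
  obtain ⟨T₂, π₂, hπ₂, a, ha1, ha2⟩ := h₁.chase b (π₁ ≫ d)
    (by rw [← hb2, Category.assoc])
  refine ⟨T₂, π₂ ≫ π₁, epi_comp _ _, a, ?_, ?_⟩
  · rw [Category.assoc, hb1, ← Category.assoc, ha1, Category.assoc]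
  · rw [Category.assoc, ha2]
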